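/- Let F be a field of characteristic ≠ 2 admitting a discrete valuation v with residue field L. Then p(F) ≥ s(L) + 1, i.e., if the level of the residue field is at least m, then there is a sum of squares in F that is not a sum of m squares. -/

import Mathlib

open Multiplicative in
/-- In the valuation subring of a `ℤₘ₀`-valued valuation on a field, the residue of an
element is zero iff its valuation is `< 1`. -/
lemma BGV.residue_eq_zero_iff {F : Type*} [Field F]
    (v : Valuation F (WithZero (Multiplicative ℤ))) (x : v.valuationSubring) :
    IsLocalRing.residue v.valuationSubring x = 0 ↔ v (x : F) < 1 := by
  rw [IsLocalRing.residue_eq_zero_iff, IsLocalRing.mem_maximalIdeal, mem_nonunits_iff]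
  constructor
  · intro h
    have hle : v (x : F) ≤ 1 := x.2
    rcases lt_or_eq_of_le hle with h1 | h1
    · exact h1
    · exfalso
      apply h
      have hx0 : (x : F) ≠ 0 := by
        intro h0
        rw [h0, map_zero] at h1
        exact zero_ne_one h1
      refine IsUnit.of_mul_eq_one (a := x)
        ⟨(x : F)⁻¹, by rw [Valuation.mem_valuationSubring_iff, map_inv₀, h1, inv_one]⟩
        (Subtype.ext ?_)
      simpa using mul_inv_cancel₀ hx0
  · intro h hu
    obtain ⟨y, hy⟩ := isUnit_iff_exists_inv.mp hu
    have h1 : v (x : F) * v (y : F) = 1 := by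
      have := congrArg (fun z : v.valuationSubring => v (z : F)) hy
      simpa [map_mul] using this
    have h2 : v (x : F) * v (y : F) < 1 := by
      calc v (x : F) * v (y : F) ≤ v (x : F) * 1 := by gcongr; exact y.2
        _ = v (x : F) := mul_one _
        _ < 1 := h
    exact absurd h1 h2.ne

lemma BGV.isSumSq_sum_sq {R : Type*} [CommRing R] {n : ℕ} (f : Fin n → R) :
    IsSumSq (∑ i, f i ^ 2) := by
  have := IsSumSq.sum_mul_self (Finset.univ : Finset (Fin n)) f
  simpa [sq] using this

open Multiplicative in
/-- Key lemma: if a sum of `n` squares has odd valuation, then `-1` is a sum of `n - 1`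
squares in the residue field. -/
lemma BGV.key {F : Type*} [Field F] (v : Valuation F (WithZero (Multiplicative ℤ)))
    {n : ℕ} (f : Fin n → F) {k : ℤ} (hk : Odd k)
    (ha : v (∑ i, f i ^ 2) = (ofAdd k : Multiplicative ℤ)) :
    ∃ g : Fin (n - 1) → IsLocalRing.ResidueField v.valuationSubring,
      ∑ i, g i ^ 2 = -1 := by
  set a := ∑ i, f i ^ 2 with hadef
  have ha0 : a ≠ 0 := by
    intro h
    rw [h, map_zero] at ha
    exact WithZero.zero_ne_coe ha
  have hn : n ≠ 0 := by
    rintro rfl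
    exact ha0 (by simp [hadef])
  obtain ⟨n', rfl⟩ := Nat.exists_eq_succ_of_ne_zero hn
  obtain ⟨i0, hi0⟩ := Finite.exists_max fun i => v (f i)
  set t := f i0 with htdef
  have ht : t ≠ 0 := by
    intro h
    apply ha0
    have hall : ∀ i, f i = 0 := by
      intro i
      have := hi0 i
      rw [h, map_zero] at this
      exact (v.zero_iff).mp (le_zero_iff.mp this)
    simp [hadef, hall]
  have htv : v t ≠ 0 := (v.ne_zero_iff).mpr ht
  have hGmem : ∀ i, f i / t ∈ v.valuationSubring := by
    intro i
    rw [Valuation.mem_valuationSubring_iff, map_div₀]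
    rw [div_le_one₀ (zero_lt_iff.mpr htv)]
    exact hi0 i
  set G : Fin (n' + 1) → v.valuationSubring := fun i => ⟨f i / t, hGmem i⟩ with hGdef
  have hGi0 : G i0 = 1 := Subtype.ext (div_self ht)
  set S : v.valuationSubring := ∑ i, G i ^ 2 with hSdef
  have hScoe : (S : F) = a / t ^ 2 := by
    push_cast [hSdef, hGdef, hadef]
    rw [Finset.sum_div]
    exact Finset.sum_congr rfl fun i _ => by rw [div_pow]
  have haS : a = t ^ 2 * (S : F) := by
    rw [hScoe, mul_div_cancel₀]
    exact pow_ne_zero _ ht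
  have hS1 : v (S : F) ≠ 1 := by
    intro h1
    have hva : v a = v t ^ 2 := by
      rw [haS, map_mul, map_pow, h1, mul_one]
    obtain ⟨γ, hγ⟩ := WithZero.ne_zero_iff_exists.mp htv
    rw [ha, ← hγ, ← WithZero.coe_pow, WithZero.coe_inj] at hva
    have hk2 : k = toAdd γ + toAdd γ := by
      have := congrArg toAdd hva
      simpa [sq, toAdd_mul] using this
    exact (Int.not_odd_iff_even.mpr ⟨toAdd γ, hk2⟩) hk
  have hSlt : v (S : F) < 1 := lt_of_le_of_ne S.2 hS1
  have hres : IsLocalRing.residue v.valuationSubring S = 0 :=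
    (BGV.residue_eq_zero_iff v S).mpr hSlt
  rw [hSdef, map_sum] at hres
  simp only [map_pow] at hres
  rw [Fin.sum_univ_succAbove
    (fun i => IsLocalRing.residue v.valuationSubring (G i) ^ 2) i0] at hres
  rw [hGi0, map_one, one_pow] at hres
  simp only [Nat.succ_sub_one]
  refine ⟨fun i => IsLocalRing.residue v.valuationSubring (G (i0.succAbove i)), ?_⟩
  linear_combination hres

open Multiplicative in
/-- **Becher–Grimm–Van Geel.** Let `F` be a field with a discrete (surjective
`ℤ`-valued) valuation `v` whose residue field `L` has characteristic ≠ 2 and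
finite level `≥ m` (i.e. `-1` is a sum of squares in `L` but not a sum of
`m - 1` squares). Then `p(F) ≥ m + 1`: there is a sum of squares in `F` that is
not a sum of `m` squares. -/
theorem pythagoras_ge_level_residue_add_one (F : Type*) [Field F]
    (v : Valuation F (WithZero (Multiplicative ℤ))) (hv : Function.Surjective v)
    (m : ℕ) (hm : 1 ≤ m)
    (h2 : (2 : IsLocalRing.ResidueField v.valuationSubring) ≠ 0)
    (hfin : ∃ n, ∃ g : Fin n → IsLocalRing.ResidueField v.valuationSubring,
      ∑ i, g i ^ 2 = -1)
    (hlev : ¬ ∃ g : Fin (m - 1) → IsLocalRing.ResidueField v.valuationSubring,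
      ∑ i, g i ^ 2 = -1) :
    ∃ a : F, IsSumSq a ∧ ¬ ∃ f : Fin m → F, a = ∑ i, f i ^ 2 := by
  classical
  obtain ⟨s, g, hg⟩ := hfin
  set r := IsLocalRing.residue v.valuationSubring with hrdef
  -- some coefficient of the representation of -1 is nonzero
  have hj : ∃ j, g j ≠ 0 := by
    by_contra h
    push_neg at h
    rw [Finset.sum_eq_zero (fun i _ => by rw [h i, zero_pow two_ne_zero])] at hg
    exact one_ne_zero (neg_eq_zero.mp hg.symm)
  obtain ⟨j, hgj⟩ := hj
  -- lift g to the valuation ring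
  choose u hu using fun i => IsLocalRing.residue_surjective
    (R := v.valuationSubring) (g i)
  set c : v.valuationSubring := 1 + ∑ i, u i ^ 2 with hcdef
  have hcres : r c = 0 := by
    rw [hcdef, map_add, map_one, map_sum]
    simp only [map_pow, hrdef, hu]
    rw [hg]
    ring
  have hclt : v (c : F) < 1 := (BGV.residue_eq_zero_iff v c).mp hcres
  have hcF : (c : F) = 1 + ∑ i, (u i : F) ^ 2 := by
    push_cast [hcdef]
    ring
  -- a uniformizer
  obtain ⟨π, hπ⟩ := hv ((ofAdd (-1 : ℤ) : Multiplicative ℤ) : WithZero (Multiplicative ℤ))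
  -- u j is a unit
  have hvj : v ((u j : v.valuationSubring) : F) = 1 := by
    have hle : v ((u j : v.valuationSubring) : F) ≤ 1 := (u j).2
    rcases lt_or_eq_of_le hle with h | h
    · exact absurd (hu j ▸ (BGV.residue_eq_zero_iff v (u j)).mpr h) hgj
    · exact h
  -- 2 is a unit
  have hv2 : v (2 : F) = 1 := by
    have h2O : r (2 : v.valuationSubring) ≠ 0 := by
      have : r (2 : v.valuationSubring) = (2 : IsLocalRing.ResidueField v.valuationSubring) := by
        rw [hrdef]; exact map_ofNat _ 2
      rw [this]; exact h2
    have hle : v ((2 : v.valuationSubring) : F) ≤ 1 := (2 : v.valuationSubring).2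
    have : v ((2 : v.valuationSubring) : F) = 1 := by
      rcases lt_or_eq_of_le hle with h | h
      · exact absurd ((BGV.residue_eq_zero_iff v _).mpr h) h2O
      · exact h
    rwa [show ((2 : v.valuationSubring) : F) = 2 from rfl] at this
  by_cases hodd : ∃ k : ℤ, Odd k ∧ v (c : F) = ((ofAdd k : Multiplicative ℤ) :
      WithZero (Multiplicative ℤ))
  · -- `c` itself works
    obtain ⟨k, hkodd, hk⟩ := hodd
    refine ⟨(c : F), ?_, ?_⟩
    · rw [hcF]
      have : (1 : F) + ∑ i, (u i : F) ^ 2 = ∑ i, (Fin.cons 1 (fun i => (u i : F)) :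
          Fin (s + 1) → F) i ^ 2 := by
        rw [Fin.sum_univ_succ]
        simp
      rw [this]
      exact BGV.isSumSq_sum_sq _
    · rintro ⟨f, hf⟩
      rw [hf] at hk
      obtain ⟨g', hg'⟩ := BGV.key v f hkodd hk
      exact hlev ⟨g', hg'⟩
  · -- modify `c` to have valuation `ofAdd (-1)`
    push_neg at hodd
    set a : F := (c : F) + 2 * (u j : F) * π + π ^ 2 with hadef
    -- valuation computations
    have hvmid : v (2 * (u j : F) * π) = ((ofAdd (-1 : ℤ) : Multiplicative ℤ) :
        WithZero (Multiplicative ℤ)) := by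
      rw [map_mul, map_mul, hv2, hvj, hπ, one_mul, one_mul]
    have hvc' : v (c : F) < ((ofAdd (-1 : ℤ) : Multiplicative ℤ) :
        WithZero (Multiplicative ℤ)) := by
      rcases eq_or_ne (v (c : F)) 0 with h0 | h0
      · rw [h0]; exact WithZero.zero_lt_coe _
      · obtain ⟨γ, hγ⟩ := WithZero.ne_zero_iff_exists.mp h0
        have hkne : ¬ Odd (toAdd γ) := fun h => (hodd (toAdd γ) h) (by rw [← hγ, ofAdd_toAdd])
        have hklt : toAdd γ < 0 := by
          have := hclt
          rw [← hγ, ← WithZero.coe_one, WithZero.coe_lt_coe] at this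
          have h01 : (1 : Multiplicative ℤ) = ofAdd (0 : ℤ) := rfl
          rw [h01] at this
          rw [← ofAdd_toAdd γ] at this
          exact Multiplicative.ofAdd_lt.mp this
        have hne1 : toAdd γ ≠ -1 := fun h => hkne (h ▸ ⟨-1, by ring⟩)
        have : toAdd γ < -1 := lt_of_le_of_ne (by omega) hne1
        rw [← hγ, WithZero.coe_lt_coe, ← ofAdd_toAdd γ]
        exact Multiplicative.ofAdd_lt.mpr this
    have hvπ2 : v (π ^ 2) < ((ofAdd (-1 : ℤ) : Multiplicative ℤ) :
        WithZero (Multiplicative ℤ)) := by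
      rw [map_pow, hπ, ← WithZero.coe_pow, WithZero.coe_lt_coe]
      have : (ofAdd (-1 : ℤ)) ^ 2 = ofAdd (-2 : ℤ) := by
        rw [sq, ← ofAdd_add]; norm_num
      rw [this]
      exact Multiplicative.ofAdd_lt.mpr (by norm_num)
    have hva : v a = ((ofAdd (-1 : ℤ) : Multiplicative ℤ) :
        WithZero (Multiplicative ℤ)) := by
      have hrearr : a = 2 * (u j : F) * π + ((c : F) + π ^ 2) := by rw [hadef]; ring
      rw [hrearr, Valuation.map_add_eq_of_lt_left]
      · exact hvmid
      · calc v ((c : F) + π ^ 2) ≤ max (v (c : F)) (v (π ^ 2)) := v.map_add _ _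
          _ < ((ofAdd (-1 : ℤ) : Multiplicative ℤ) : WithZero (Multiplicative ℤ)) :=
            max_lt hvc' hvπ2
          _ = v (2 * (u j : F) * π) := hvmid.symm
    -- a is a sum of squares
    have hs0 : s ≠ 0 := fun h => (h ▸ j).elim0
    obtain ⟨s', rfl⟩ := Nat.exists_eq_succ_of_ne_zero hs0
    have hsplit : (∑ i, ((u i : F)) ^ 2) =
        (u j : F) ^ 2 + ∑ i', (u (j.succAbove i') : F) ^ 2 :=
      Fin.sum_univ_succAbove (fun i => ((u i : F)) ^ 2) j
    have haeq : a = ∑ i, (Fin.cons ((u j : F) + π) (Fin.cons 1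
        (fun i' => (u (j.succAbove i') : F))) : Fin (s' + 2) → F) i ^ 2 := by
      rw [Fin.sum_univ_succ, Fin.sum_univ_succ]
      simp only [Fin.cons_zero, Fin.cons_succ]
      rw [hadef, hcF, hsplit]
      ring
    refine ⟨a, ?_, ?_⟩
    · rw [haeq]; exact BGV.isSumSq_sum_sq _
    · rintro ⟨f, hf⟩
      rw [hf] at hva
      obtain ⟨g', hg'⟩ := BGV.key v f ⟨-1, by ring⟩ hva
      exact hlev ⟨g', hg'⟩
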